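/- Let q be an odd prime power, 𝔽_q a finite field of order q, m ≥ 2, and let H be the point-by-line incidence matrix over 𝔽₂ of PG₁(m,q) (rows indexed by 1-dimensional subspaces of 𝔽_q^{m+1}, columns indexed by 2-dimensional subspaces, entry 1 exactly when the point is contained in the line). Then the rank of H over 𝔽₂ equals v − 1 = (q^{m+1} − q)/(q − 1), where v = (q^{m+1} − 1)/(q − 1) is the number of points. -/

import Mathlib

open scoped Classical

noncomputable instance (F : Type) [Field F] [Fintype F] (n k : ℕ) :
    Fintype {P : Submodule F (Fin n → F) // Module.finrank F P = k} :=
  Fintype.ofFinite _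

set_option linter.unusedSectionVars false
set_option maxHeartbeats 1000000

open Module Submodule Matrix

section AuxPG

variable {F : Type} [Field F] [Fintype F] {V : Type} [AddCommGroup V] [Module F V]
  [FiniteDimensional F V] [Fintype V]
  [Fintype {P : Submodule F V // finrank F P = 1}]
  [Fintype {L : Submodule F V // finrank F L = 2}]

theorem span_eq_of_mem_dim1 {P : Submodule F V} (hP : finrank F P = 1) {v : V}
    (hv : v ∈ P) (h0 : v ≠ 0) : Submodule.span F {v} = P :=
  Submodule.eq_of_le_of_finrank_eq (span_le.mpr (Set.singleton_subset_iff.mpr hv))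
    (by rw [finrank_span_singleton h0, hP])

theorem two_dim_sup {A B : Submodule F V} (hA : finrank F A = 1) (hB : finrank F B = 1)
    (hAB : A ≠ B) : finrank F ↥(A ⊔ B) = 2 := by
  have h := Submodule.finrank_sup_add_finrank_inf_eq A B
  have hlt : A ⊓ B < A := by
    rcases lt_or_eq_of_le (inf_le_left : A ⊓ B ≤ A) with h' | h'
    · exact h'
    · exfalso
      have hle : A ≤ B := by
        have := inf_le_right (a := A) (b := B); rw [h'] at this; exact this
      exact hAB (Submodule.eq_of_le_of_finrank_eq hle (hA.trans hB.symm))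
  have := Submodule.finrank_lt_finrank_of_lt hlt
  omega

theorem line_unique {A B L : Submodule F V} (hA : finrank F A = 1) (hB : finrank F B = 1)
    (hAB : A ≠ B) (hL : finrank F L = 2) (h1 : A ≤ L) (h2 : B ≤ L) : L = A ⊔ B :=
  (Submodule.eq_of_le_of_finrank_eq (sup_le h1 h2) (by rw [two_dim_sup hA hB hAB, hL])).symm

theorem exists_plane {W : Submodule F V} (hW : finrank F W = 2) (h3 : 3 ≤ finrank F V) :
    ∃ π : Submodule F V, finrank F π = 3 ∧ W ≤ π := by
  have hne : W ≠ ⊤ := by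
    intro h; rw [h, finrank_top] at hW; omega
  obtain ⟨v, hv⟩ : ∃ v, v ∉ W := by
    by_contra h; push_neg at h; exact hne (eq_top_iff.mpr fun x _ => h x)
  have hv0 : v ≠ 0 := fun h => hv (h ▸ W.zero_mem)
  refine ⟨W ⊔ Submodule.span F {v}, ?_, le_sup_left⟩
  have h := Submodule.finrank_sup_add_finrank_inf_eq W (Submodule.span F {v})
  have hinf : W ⊓ Submodule.span F {v} = ⊥ := by
    rw [eq_bot_iff]
    rintro x ⟨hxW, hxs⟩
    obtain ⟨c, rfl⟩ := Submodule.mem_span_singleton.mp hxs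
    rcases eq_or_ne c 0 with rfl | hc
    · simp
    · exfalso
      apply hv
      have := W.smul_mem c⁻¹ hxW
      rwa [smul_smul, inv_mul_cancel₀ hc, one_smul] at this
  rw [hinf] at h
  rw [finrank_span_singleton hv0] at h
  simp [finrank_bot] at h
  omega

theorem nat_card_fiberwise {α β : Type} [Finite α] [Fintype β] (f : α → β) (k : ℕ)
    (h : ∀ b : β, Nat.card {a : α // f a = b} = k) : Nat.card α = Fintype.card β * k := by
  classical
  have e := (Equiv.sigmaFiberEquiv f).symm
  rw [Nat.card_congr e]
  have : ∀ b : β, Nat.card {a : α // f a = b} = Nat.card {a : α // f a = b} := fun _ => rfl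
  cases nonempty_fintype α
  rw [Nat.card_eq_fintype_card, Fintype.card_sigma]
  rw [Finset.sum_congr rfl (fun b _ => by rw [← Nat.card_eq_fintype_card, h b])]
  simp [Finset.sum_const, mul_comm]

theorem nat_card_and_ne {α : Type} [Fintype α] (p : α → Prop) (a : α) (ha : p a) :
    Nat.card {x : α // p x ∧ x ≠ a} = Nat.card {x : α // p x} - 1 := by
  classical
  rw [Nat.card_eq_fintype_card, Nat.card_eq_fintype_card, Fintype.card_subtype,
    Fintype.card_subtype]
  have : (Finset.univ.filter fun x => p x ∧ x ≠ a) = (Finset.univ.filter p).erase a := by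
    ext x
    simp only [Finset.mem_filter, Finset.mem_univ, true_and, Finset.mem_erase]
    tauto
  rw [this, Finset.card_erase_of_mem (by simp [ha])]


theorem nat_card_nonzero (U : Submodule F V) :
    Nat.card {v : V // v ∈ U ∧ v ≠ 0} = Fintype.card F ^ finrank F U - 1 := by
  classical
  have e : {v : V // v ∈ U ∧ v ≠ 0} ≃ {x : U // x ≠ 0} :=
    { toFun := fun v => ⟨⟨v.1, v.2.1⟩, fun h => v.2.2 (congrArg Subtype.val h)⟩
      invFun := fun x => ⟨x.1.1, x.1.2, fun h => x.2 (Subtype.ext h)⟩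
      left_inv := fun v => rfl
      right_inv := fun x => rfl }
  rw [Nat.card_congr e, Nat.card_eq_fintype_card]
  have h1 : Fintype.card {x : U // x ≠ 0} = Fintype.card U - Fintype.card {x : U // x = 0} :=
    Fintype.card_subtype_compl (fun x : U => x = 0)
  rw [h1, Fintype.card_subtype_eq (0 : U), card_eq_pow_finrank (K := F) (V := U)]

theorem nat_card_points_le (W : Submodule F V) :
    Nat.card {P : {P : Submodule F V // finrank F P = 1} // P.1 ≤ W} * (Fintype.card F - 1)
      = Fintype.card F ^ finrank F W - 1 := by
  classical
  set ι := {P : Submodule F V // finrank F P = 1}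
  have : Finite {P : ι // P.1 ≤ W} := Finite.of_injective (fun P => P.1.1)
    (fun a b h => by ext1; ext1; exact h)
  cases nonempty_fintype {P : ι // P.1 ≤ W}
  set f : {v : V // v ∈ W ∧ v ≠ 0} → {P : ι // P.1 ≤ W} := fun v =>
    ⟨⟨Submodule.span F {v.1}, finrank_span_singleton v.2.2⟩,
      span_le.mpr (Set.singleton_subset_iff.mpr v.2.1)⟩ with hf
  have hfib : ∀ b : {P : ι // P.1 ≤ W},
      Nat.card {a : {v : V // v ∈ W ∧ v ≠ 0} // f a = b} = Fintype.card F - 1 := by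
    intro b
    have e : {a : {v : V // v ∈ W ∧ v ≠ 0} // f a = b} ≃ {v : V // v ∈ b.1.1 ∧ v ≠ 0} :=
      { toFun := fun a => ⟨a.1.1, by
          have : Submodule.span F {a.1.1} = b.1.1 := congrArg (fun x => x.1.1) a.2
          exact this ▸ Submodule.mem_span_singleton_self _, a.1.2.2⟩
        invFun := fun v => ⟨⟨v.1, b.2 v.2.1, v.2.2⟩, by
          apply Subtype.ext; apply Subtype.ext
          exact span_eq_of_mem_dim1 b.1.2 v.2.1 v.2.2⟩
        left_inv := fun a => by apply Subtype.ext; apply Subtype.ext; rfl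
        right_inv := fun v => rfl }
    rw [Nat.card_congr e, nat_card_nonzero, b.1.2, pow_one]
  have := nat_card_fiberwise f (Fintype.card F - 1) hfib
  rw [nat_card_nonzero] at this
  rw [this, Nat.card_eq_fintype_card]

instance fin_pts : Finite {P : Submodule F V // finrank F P = 1} :=
  Finite.of_injective (fun P => P.1.carrier) (fun a b h => by
    apply Subtype.ext; apply SetLike.coe_injective; exact h)

instance fin_lines : Finite {L : Submodule F V // finrank F L = 2} :=
  Finite.of_injective (fun P => P.1.carrier) (fun a b h => by
    apply Subtype.ext; apply SetLike.coe_injective; exact h)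

theorem card_points_on_line {L : Submodule F V} (hL : finrank F L = 2) :
    Nat.card {P : {P : Submodule F V // finrank F P = 1} // P.1 ≤ L}
      = Fintype.card F + 1 := by
  have h := nat_card_points_le (F := F) L
  rw [hL] at h
  have hq : 2 ≤ Fintype.card F := Fintype.one_lt_card
  generalize hQ : Fintype.card F = q at h hq ⊢
  apply Nat.eq_of_mul_eq_mul_right (show 0 < q - 1 by omega)
  rw [h]
  obtain ⟨q', rfl⟩ : ∃ q', q = q' + 2 := ⟨q - 2, by omega⟩
  have e1 : (q' + 2) ^ 2 = q' * q' + 4 * q' + 4 := by ring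
  have e2 : (q' + 2 + 1) * (q' + 2 - 1) = q' * q' + 4 * q' + 3 := by
    rw [show q' + 2 - 1 = q' + 1 from rfl]; ring
  omega

theorem card_points_in_plane {W : Submodule F V} (hW : finrank F W = 3) :
    Nat.card {P : {P : Submodule F V // finrank F P = 1} // P.1 ≤ W}
      = Fintype.card F ^ 2 + Fintype.card F + 1 := by
  have h := nat_card_points_le (F := F) W
  rw [hW] at h
  have hq : 2 ≤ Fintype.card F := Fintype.one_lt_card
  generalize hQ : Fintype.card F = q at h hq ⊢
  apply Nat.eq_of_mul_eq_mul_right (show 0 < q - 1 by omega)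
  rw [h]
  obtain ⟨q', rfl⟩ : ∃ q', q = q' + 2 := ⟨q - 2, by omega⟩
  have e1 : ((q' + 2) ^ 2 + (q' + 2) + 1) * (q' + 2 - 1)
      = q' * q' * q' + 6 * (q' * q') + 12 * q' + 7 := by
    rw [show q' + 2 - 1 = q' + 1 from rfl]; ring
  have e2 : (q' + 2) ^ 3 = q' * q' * q' + 6 * (q' * q') + 12 * q' + 8 := by ring
  omega

theorem card_lines_through_point {π P : Submodule F V} (hπ : finrank F π = 3)
    (hP : finrank F P = 1) (hPπ : P ≤ π) :
    Nat.card {L : {L : Submodule F V // finrank F L = 2} // L.1 ≤ π ∧ P ≤ L.1}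
      = Fintype.card F + 1 := by
  classical
  set ι := {P : Submodule F V // finrank F P = 1} with hι
  set κ := {L : Submodule F V // finrank F L = 2} with hκ
  set β := {L : κ // L.1 ≤ π ∧ P ≤ L.1} with hβ
  set P' : ι := ⟨P, hP⟩ with hP'
  set α := {R : ι // R.1 ≤ π ∧ R ≠ P'} with hα
  cases nonempty_fintype β
  have hne : ∀ (R : ι), R ≠ P' → R.1 ≠ P := fun R h h' => h (Subtype.ext h')
  set f : α → β := fun R =>
    ⟨⟨P ⊔ R.1.1, two_dim_sup hP R.1.2 (Ne.symm (hne R.1 R.2.2))⟩,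
      sup_le hPπ R.2.1, le_sup_left⟩ with hf
  have hfib : ∀ b : β, Nat.card {a : α // f a = b} = Fintype.card F := by
    intro b
    have e : {a : α // f a = b} ≃ {R : ι // R.1 ≤ b.1.1 ∧ R ≠ P'} :=
      { toFun := fun a => ⟨a.1.1, by
          have hb : P ⊔ a.1.1.1 = b.1.1 := congrArg (fun x => x.1.1) a.2
          exact hb ▸ le_sup_right, a.1.2.2⟩
        invFun := fun R => ⟨⟨R.1, R.2.1.trans b.2.1, R.2.2⟩, by
          apply Subtype.ext; apply Subtype.ext
          exact (line_unique hP R.1.2 (Ne.symm (hne R.1 R.2.2)) b.1.2 b.2.2 R.2.1).symm⟩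
        left_inv := fun a => by apply Subtype.ext; apply Subtype.ext; rfl
        right_inv := fun R => rfl }
    rw [Nat.card_congr e]
    have h1 := nat_card_and_ne (fun R : ι => R.1 ≤ b.1.1) P' b.2.2
    rw [h1, card_points_on_line b.1.2]
    omega
  have h := nat_card_fiberwise f (Fintype.card F) hfib
  have hcα : Nat.card α = Fintype.card F ^ 2 + Fintype.card F := by
    rw [hα, nat_card_and_ne (fun R : ι => R.1 ≤ π) P' hPπ, card_points_in_plane hπ]
    omega
  rw [hcα] at h
  have hq : 2 ≤ Fintype.card F := Fintype.one_lt_card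
  have : Fintype.card β * Fintype.card F = (Fintype.card F + 1) * Fintype.card F := by
    rw [← h]; ring
  have hcb : Fintype.card β = Fintype.card F + 1 :=
    Nat.eq_of_mul_eq_mul_right (by omega) this
  rw [Nat.card_eq_fintype_card, hcb]

theorem filter_card_eq_nat_card {α : Type} [Fintype α] (p : α → Prop) [DecidablePred p] :
    (Finset.univ.filter p).card = Nat.card {x : α // p x} := by
  classical
  rw [Nat.card_eq_fintype_card, Fintype.card_subtype]

-- three filter-card helpers
theorem helper1 {π : Submodule F V} (A R : {P : Submodule F V // finrank F P = 1})
    (hR : ¬ R.1 ≤ π) :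
    (Finset.univ.filter fun L : {L : Submodule F V // finrank F L = 2} =>
      (L.1 ≤ π ∧ A.1 ≤ L.1) ∧ R.1 ≤ L.1).card = 0 := by
  rw [Finset.card_eq_zero, Finset.filter_eq_empty_iff]
  rintro L - ⟨⟨h1, -⟩, h3⟩
  exact hR (h3.trans h1)

theorem helper2 {π : Submodule F V} (hπ : finrank F π = 3)
    (A : {P : Submodule F V // finrank F P = 1}) (hA : A.1 ≤ π) :
    (Finset.univ.filter fun L : {L : Submodule F V // finrank F L = 2} =>
      (L.1 ≤ π ∧ A.1 ≤ L.1) ∧ A.1 ≤ L.1).card = Fintype.card F + 1 := by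
  have he : (Finset.univ.filter fun L : {L : Submodule F V // finrank F L = 2} =>
      (L.1 ≤ π ∧ A.1 ≤ L.1) ∧ A.1 ≤ L.1) =
      (Finset.univ.filter fun L : {L : Submodule F V // finrank F L = 2} =>
      L.1 ≤ π ∧ A.1 ≤ L.1) := Finset.filter_congr (fun L _ => by tauto)
  rw [he]
  exact (filter_card_eq_nat_card _).trans (card_lines_through_point hπ A.2 hA)

theorem helper3 {π : Submodule F V} (A R : {P : Submodule F V // finrank F P = 1})
    (hA : A.1 ≤ π) (hR : R.1 ≤ π) (hne : R ≠ A) :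
    (Finset.univ.filter fun L : {L : Submodule F V // finrank F L = 2} =>
      (L.1 ≤ π ∧ A.1 ≤ L.1) ∧ R.1 ≤ L.1).card = 1 := by
  have hAR : A.1 ≠ R.1 := fun h => hne (Subtype.ext h.symm)
  rw [Finset.card_eq_one]
  refine ⟨⟨A.1 ⊔ R.1, two_dim_sup A.2 R.2 hAR⟩, ?_⟩
  ext L
  simp only [Finset.mem_filter, Finset.mem_univ, true_and, Finset.mem_singleton]
  constructor
  · rintro ⟨⟨h1, h2⟩, h3⟩
    exact Subtype.ext (line_unique A.2 R.2 hAR L.2 h2 h3)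
  · rintro rfl
    exact ⟨⟨sup_le hA hR, le_sup_left⟩, le_sup_right⟩

theorem key_mem (h3 : 3 ≤ finrank F V) (hodd : Odd (Fintype.card F))
    (P Q : {P : Submodule F V // finrank F P = 1}) :
    (fun R : {P : Submodule F V // finrank F P = 1} =>
        (if R = P then (1 : ZMod 2) else 0) + (if R = Q then 1 else 0)) ∈
      Submodule.span (ZMod 2)
        (Set.range fun (L : {L : Submodule F V // finrank F L = 2})
          (R : {P : Submodule F V // finrank F P = 1}) =>
            if R.1 ≤ L.1 then (1 : ZMod 2) else 0) := by
  classical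
  set cols := fun (L : {L : Submodule F V // finrank F L = 2})
          (R : {P : Submodule F V // finrank F P = 1}) =>
            if R.1 ≤ L.1 then (1 : ZMod 2) else 0 with hcols
  by_cases hPQ : P = Q
  · subst hPQ
    have : (fun R : {P : Submodule F V // finrank F P = 1} =>
        (if R = P then (1 : ZMod 2) else 0) + (if R = P then 1 else 0)) = 0 := by
      funext R
      by_cases h : R = P <;> simp [h]
      decide
    rw [this]; exact Submodule.zero_mem _
  · have hPQ' : P.1 ≠ Q.1 := fun h => hPQ (Subtype.ext h)
    obtain ⟨π, hπ, hsub⟩ := exists_plane (two_dim_sup P.2 Q.2 hPQ') h3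
    have hPπ : P.1 ≤ π := le_trans le_sup_left hsub
    have hQπ : Q.1 ≤ π := le_trans le_sup_right hsub
    set SP := Finset.univ.filter fun L : {L : Submodule F V // finrank F L = 2} =>
      L.1 ≤ π ∧ P.1 ≤ L.1 with hSP
    set SQ := Finset.univ.filter fun L : {L : Submodule F V // finrank F L = 2} =>
      L.1 ≤ π ∧ Q.1 ≤ L.1 with hSQ
    have hid : (fun R : {P : Submodule F V // finrank F P = 1} =>
        (if R = P then (1 : ZMod 2) else 0) + (if R = Q then 1 else 0)) =
        (∑ L ∈ SP, cols L) + (∑ L ∈ SQ, cols L) := by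
      funext R
      have hev : ∀ (S : Finset {L : Submodule F V // finrank F L = 2}),
          (∑ L ∈ S, cols L) R = ∑ L ∈ S, (if R.1 ≤ L.1 then (1 : ZMod 2) else 0) := by
        intro S
        rw [Finset.sum_apply]
      simp only [Pi.add_apply, hev, Finset.sum_boole, hSP, hSQ, Finset.filter_filter]
      have hcast : ∀ n : ℕ, 2 ∣ n → (n : ZMod 2) = 0 := fun n hn =>
        (ZMod.natCast_eq_zero_iff n 2).mpr hn
      obtain ⟨k, hk⟩ := hodd
      by_cases hRπ : R.1 ≤ π
      · by_cases hRP : R = P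
        · subst hRP
          rw [helper2 hπ R hRπ, helper3 Q R hQπ hRπ hPQ]  -- careful order
          rw [hcast (Fintype.card F + 1) ⟨k + 1, by omega⟩]
          simp [hPQ]
        · by_cases hRQ : R = Q
          · subst hRQ
            rw [helper3 P R hPπ hRπ (Ne.symm hPQ), helper2 hπ R hRπ]
            rw [hcast (Fintype.card F + 1) ⟨k + 1, by omega⟩]
            simp [hRP]
          · rw [helper3 P R hPπ hRπ hRP, helper3 Q R hQπ hRπ hRQ]
            simp [hRP, hRQ]
            decide
      · have hRP : R ≠ P := fun h => hRπ (h ▸ hPπ)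
        have hRQ : R ≠ Q := fun h => hRπ (h ▸ hQπ)
        rw [helper1 P R hRπ, helper1 Q R hRπ]
        simp [hRP, hRQ]
    rw [hid]
    apply Submodule.add_mem <;>
      exact Submodule.sum_mem _ fun L _ => Submodule.subset_span (Set.mem_range_self L)

theorem rank_lemma (h3 : 3 ≤ finrank F V) (hodd : Odd (Fintype.card F))
    (H : Matrix {P : Submodule F V // finrank F P = 1}
      {L : Submodule F V // finrank F L = 2} (ZMod 2))
    (hH : ∀ P L, H P L = if P.1 ≤ L.1 then 1 else 0) :
    H.rank = Fintype.card {P : Submodule F V // finrank F P = 1} - 1 := by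
  classical
  set cols : {L : Submodule F V // finrank F L = 2} → {P : Submodule F V // finrank F P = 1} → ZMod 2 := fun L R => if R.1 ≤ L.1 then (1 : ZMod 2) else 0 with hcols
  have hT : Hᵀ = cols := by
    funext L R
    rw [Matrix.transpose_apply]
    exact hH R L
  -- the sum functional
  set Φ : ({P : Submodule F V // finrank F P = 1} → ZMod 2) →ₗ[ZMod 2] ZMod 2 :=
    { toFun := fun x => ∑ R, x R
      map_add' := fun x y => by simp [Finset.sum_add_distrib]
      map_smul' := fun c x => by simp [Finset.mul_sum] } with hΦ
  have : Nontrivial V := Module.nontrivial_of_finrank_pos (R := F) (by omega)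
  obtain ⟨v, hv⟩ := exists_ne (0 : V)
  set P₀ : {P : Submodule F V // finrank F P = 1} := ⟨Submodule.span F {v}, finrank_span_singleton hv⟩ with hP₀
  have hsurj : Function.Surjective Φ := by
    intro c
    refine ⟨fun R => if R = P₀ then c else 0, ?_⟩
    show (∑ R : {P : Submodule F V // finrank F P = 1}, if R = P₀ then c else 0) = c
    rw [Finset.sum_ite_eq' Finset.univ P₀ (fun _ => c)]
    simp
  have hcast : ∀ n : ℕ, 2 ∣ n → (n : ZMod 2) = 0 := fun n hn =>
    (ZMod.natCast_eq_zero_iff n 2).mpr hn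
  obtain ⟨k, hk⟩ := hodd
  have hker_col : ∀ L : {L : Submodule F V // finrank F L = 2}, Φ (cols L) = 0 := by
    intro L
    show (∑ R : {P : Submodule F V // finrank F P = 1}, if R.1 ≤ L.1 then (1 : ZMod 2) else 0) = 0
    rw [Finset.sum_boole, filter_card_eq_nat_card, card_points_on_line L.2]
    exact hcast _ ⟨k + 1, by omega⟩
  have hspan : Submodule.span (ZMod 2) (Set.range cols) = LinearMap.ker Φ := by
    apply le_antisymm
    · rw [Submodule.span_le]
      rintro - ⟨L, rfl⟩
      exact LinearMap.mem_ker.mpr (hker_col L)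
    · intro x hx
      have hx0 : (∑ R : {P : Submodule F V // finrank F P = 1}, x R) = 0 := LinearMap.mem_ker.mp hx
      have hrep : x = ∑ P : {P : Submodule F V // finrank F P = 1}, x P •
          (fun R : {P : Submodule F V // finrank F P = 1} => (if R = P then (1 : ZMod 2) else 0) + (if R = P₀ then 1 else 0)) := by
        funext R
        rw [Finset.sum_apply]
        simp only [Pi.smul_apply, Pi.add_apply, smul_eq_mul, mul_add]
        rw [Finset.sum_add_distrib]
        have h1 : (∑ P : {P : Submodule F V // finrank F P = 1}, x P * if R = P then (1 : ZMod 2) else 0) = x R := by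
          have : ∀ P : {P : Submodule F V // finrank F P = 1}, x P * (if R = P then (1 : ZMod 2) else 0)
              = if R = P then x P else 0 := by
            intro P; by_cases h : R = P <;> simp [h]
          rw [Finset.sum_congr rfl fun P _ => this P, Finset.sum_ite_eq]
          simp
        have h2 : (∑ P : {P : Submodule F V // finrank F P = 1}, x P * if R = P₀ then (1 : ZMod 2) else 0) = 0 := by
          by_cases h : R = P₀ <;> simp [h, hx0]
        rw [h1, h2, add_zero]
      rw [hrep]
      exact Submodule.sum_mem _ fun P _ =>
        Submodule.smul_mem _ _ (key_mem h3 ⟨k, hk⟩ P P₀)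
  have hrk := Matrix.rank_eq_finrank_span_cols H
  rw [show H.col = cols from hT, hspan] at hrk
  have hrn := LinearMap.finrank_range_add_finrank_ker Φ
  rw [LinearMap.range_eq_top.mpr hsurj, finrank_top, Module.finrank_self] at hrn
  have hpi : finrank (ZMod 2) ({P : Submodule F V // finrank F P = 1} → ZMod 2) = Fintype.card {P : Submodule F V // finrank F P = 1} := by
    rw [Module.finrank_pi]
  rw [hpi] at hrn
  rw [hrk]
  omega

end AuxPG

/-- Frumkin–Yakir: for `q` an odd prime power and `m ≥ 2`, the
point-by-line incidence matrix `H` over `𝔽₂` of `PG₁(m, q)` has 𝔽₂-rank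
`v - 1 = (q^{m+1} - q)/(q - 1)`, where `v = (q^{m+1} - 1)/(q - 1)` is the number of
points. -/
theorem stmt_17 (q m : ℕ) (hq : Odd q) (hm : 2 ≤ m)
    (F : Type) [Field F] [Fintype F] (hF : Fintype.card F = q)
    (H : Matrix {P : Submodule F (Fin (m + 1) → F) // Module.finrank F P = 1}
      {L : Submodule F (Fin (m + 1) → F) // Module.finrank F L = 2} (ZMod 2))
    (hH : ∀ P L, H P L = if P.1 ≤ L.1 then 1 else 0) :
    Fintype.card {P : Submodule F (Fin (m + 1) → F) // Module.finrank F P = 1} =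
        (q ^ (m + 1) - 1) / (q - 1) ∧
      H.rank = (q ^ (m + 1) - 1) / (q - 1) - 1 ∧
      H.rank = (q ^ (m + 1) - q) / (q - 1) := by
  classical
  have hq2 : 2 ≤ q := hF ▸ Fintype.one_lt_card
  have hq3 : 3 ≤ q := by obtain ⟨k, hk⟩ := hq; omega
  have hfr : finrank F (Fin (m + 1) → F) = m + 1 := Module.finrank_fin_fun F
  have hodd : Odd (Fintype.card F) := by rw [hF]; exact hq
  have hv := nat_card_points_le (F := F) (V := Fin (m + 1) → F) ⊤
  rw [finrank_top, hfr, hF] at hv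
  have hveq : Nat.card
      {P : {P : Submodule F (Fin (m + 1) → F) // finrank F P = 1} // P.1 ≤ ⊤} =
      Fintype.card {P : Submodule F (Fin (m + 1) → F) // finrank F P = 1} := by
    rw [Nat.card_congr (Equiv.subtypeUnivEquiv (fun P => le_top)), Nat.card_eq_fintype_card]
  rw [hveq] at hv
  have hrank := rank_lemma (by rw [hfr]; omega) hodd H hH
  set v := Fintype.card {P : Submodule F (Fin (m + 1) → F) // finrank F P = 1} with hvdef
  have hA : q ≤ q ^ (m + 1) := Nat.le_self_pow (by omega) q
  have hv1 : 1 ≤ v := by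
    rcases Nat.eq_zero_or_pos v with h0 | h1
    · rw [h0, zero_mul] at hv; omega
    · exact h1
  have hdiv1 : (q ^ (m + 1) - 1) / (q - 1) = v := by
    rw [← hv, Nat.mul_div_cancel _ (by omega : 0 < q - 1)]
  have h2 : (v - 1) * (q - 1) = q ^ (m + 1) - q := by
    have e := Nat.sub_mul v 1 (q - 1)
    rw [one_mul, hv] at e
    omega
  have hdiv2 : (q ^ (m + 1) - q) / (q - 1) = v - 1 := by
    rw [← h2, Nat.mul_div_cancel _ (by omega : 0 < q - 1)]
  exact ⟨hdiv1.symm, by rw [hrank, hdiv1], by rw [hrank, hdiv2]⟩
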